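/- Let x* ∈ Ω be a Nash equilibrium and 𝐱* := 𝟏_N ⊗ x*. Let θ ∈ [μ, θ0] be a Lipschitz constant of 𝐅, let λ2 > 0 satisfy ⟨v, (I_{Nn} − 𝐖)v⟩ ≥ λ2‖v‖² for all v ∈ ℝ^{Nn} orthogonal to E_n, define α_max := 4μλ2/((θ0+θ)² + 4μθ) and M := α·[[μ/N, −(θ0+θ)/(2√N)], [−(θ0+θ)/(2√N), λ2/α − θ]], and let α ∈ (0, α_max). Let ρ_α > 0 satisfy ⟨Mv, v⟩ ≥ ρ_α‖v‖² for all v ∈ ℝ². Let Φ := I_{Nn} + 𝐖, let ‖Φ‖ be its operator norm, and let λ_m > 0 satisfy ⟨Φv, v⟩ ≥ λ_m‖v‖² for all v ∈ ℝ^{Nn}. Then every sequence (𝐱^k)_{k∈ℕ} in ℝ^{Nn} satisfying 0 ∈ Φ(𝐱^{k+1} − 𝐱^k) + F_a(𝐱^{k+1}) + N_𝛀(𝐱^{k+1}) for all k converges to 𝐱* with linear rate: ‖𝐱^k − 𝐱*‖ ≤ √(‖Φ‖/λ_m) · (1/(1 + ρ_α/‖Φ‖))^k · ‖𝐱^0 −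 𝐱*‖ for all k ∈ ℕ. -/

import Mathlib

open scoped InnerProductSpace Matrix

/-- The strategy-profile space `ℝ^n = ℝ^{n_1} × ⋯ × ℝ^{n_N}`, with the Euclidean (ℓ²)
structure. Block `i` is agent `i`'s strategy space `ℝ^{n_i}`. -/
abbrev Prof (N : ℕ) (d : Fin N → ℕ) : Type :=
  PiLp 2 (fun i : Fin N => EuclideanSpace ℝ (Fin (d i)))

/-- The stacked space `ℝ^{Nn}` of all agents' estimates; block `i` is agent `i`'s estimate
`𝐱_i ∈ ℝ^n` of the full strategy profile. -/
abbrev Est (N : ℕ) (d : Fin N → ℕ) : Type :=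
  PiLp 2 (fun _ : Fin N => Prof N d)

/-- The pseudo-gradient `F(x) := col(∇_{x_i} J_i(x_i, x_{−i}))_i`, built from the partial
gradients `G i`. -/
noncomputable def pseudoGrad {N : ℕ} {d : Fin N → ℕ}
    (G : ∀ i : Fin N, Prof N d → EuclideanSpace ℝ (Fin (d i)))
    (x : Prof N d) : Prof N d :=
  WithLp.toLp 2 (fun i => G i x)

/-- The extended pseudo-gradient `𝐅(𝐱) := col(∇_{x_i} J_i(𝐱_{i,i}, 𝐱_{i,−i}))_i`. -/
noncomputable def extPseudoGrad {N : ℕ} {d : Fin N → ℕ}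
    (G : ∀ i : Fin N, Prof N d → EuclideanSpace ℝ (Fin (d i)))
    (bx : Est N d) : Prof N d :=
  WithLp.toLp 2 (fun i => G i (bx i))

/-- `Rᵀ` places block `i` of `v ∈ ℝ^n` in the `(i,i)`-block position of `ℝ^{Nn}`,
with zeros elsewhere. -/
noncomputable def RT {N : ℕ} {d : Fin N → ℕ} (v : Prof N d) : Est N d :=
  WithLp.toLp 2 (fun i => WithLp.toLp 2 (Function.update (0 : Prof N d) i (v i)))

/-- `𝐖 = W ⊗ I_n` acting blockwise: `(𝐖𝐱)_i = Σ_j w_{ij} 𝐱_j`. -/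
noncomputable def Wact {N : ℕ} {d : Fin N → ℕ} (W : Matrix (Fin N) (Fin N) ℝ) (bx : Est N d) : Est N d :=
  WithLp.toLp 2 (fun i => ∑ j, W i j • bx j)

/-- `F_a(𝐱) := α Rᵀ𝐅(𝐱) + (I_{Nn} − 𝐖)𝐱`. -/
noncomputable def Fa {N : ℕ} {d : Fin N → ℕ} (α : ℝ)
    (G : ∀ i : Fin N, Prof N d → EuclideanSpace ℝ (Fin (d i)))
    (W : Matrix (Fin N) (Fin N) ℝ) (bx : Est N d) : Est N d :=
  α • RT (extPseudoGrad G bx) + (bx - Wact W bx)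

/-- `𝛀 := {𝐱 ∈ ℝ^{Nn} : 𝐱_{i,i} ∈ Ω_i for all i}`. -/
def bigOmega {N : ℕ} {d : Fin N → ℕ}
    (Ω : ∀ i : Fin N, Set (EuclideanSpace ℝ (Fin (d i)))) : Set (Est N d) :=
  {bx | ∀ i, bx i i ∈ Ω i}

/-- Normal cone operator of a closed convex set `S` at `x`
(empty if `x ∉ S`). -/
def normalCone {E : Type*} [NormedAddCommGroup E] [InnerProductSpace ℝ E]
    (S : Set E) (x : E) : Set E :=
  {v | x ∈ S ∧ ∀ z ∈ S, ⟪v, z - x⟫_ℝ ≤ 0}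

/-- The consensus subspace `E_n := {𝟏_N ⊗ y : y ∈ ℝ^n} ⊆ ℝ^{Nn}`. -/
def consensus (N : ℕ) (d : Fin N → ℕ) : Set (Est N d) :=
  {bx | ∃ y : Prof N d, ∀ i, bx i = y}

/-- The preconditioning matrix `Φ := I_{Nn} + 𝐖`, as an operator on `ℝ^{Nn}`. -/
noncomputable def PhiOp {N : ℕ} {d : Fin N → ℕ} (W : Matrix (Fin N) (Fin N) ℝ)
    (bx : Est N d) : Est N d :=
  bx + Wact W bx

namespace SGaux

lemma quad_nonneg_imp (A B C : ℝ) (hA : 0 ≤ A)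
    (h : ∀ r : ℝ, 0 ≤ r ^ 2 * A - 2 * r * B + C) : B ≤ Real.sqrt A * Real.sqrt C := by
  have hC : 0 ≤ C := by simpa using h 0
  have hBsq : B ^ 2 ≤ A * C := by
    rcases eq_or_lt_of_le hA with hA0 | hA0
    · have hB0 : B = 0 := by
        by_contra hB
        have h2 := h ((C + 1) / (2 * B))
        rw [← hA0] at h2
        have h3 : (C + 1) / (2 * B) * B = (C + 1) / 2 := by
          field_simp
        nlinarith [h2, h3]
      rw [hB0, ← hA0]; nlinarith
    · have h2 := h (B / A)
      have h3 : (B / A) ^ 2 * A - 2 * (B / A) * B + C = C - B ^ 2 / A := by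
        field_simp; ring
      rw [h3] at h2
      have := (div_le_iff₀ hA0).mp (by linarith : B ^ 2 / A ≤ C)
      linarith
  calc B ≤ |B| := le_abs_self B
    _ = Real.sqrt (B ^ 2) := (Real.sqrt_sq_eq_abs B).symm
    _ ≤ Real.sqrt (A * C) := Real.sqrt_le_sqrt hBsq
    _ = Real.sqrt A * Real.sqrt C := Real.sqrt_mul hA C

section Abstract
variable {E : Type*} [NormedAddCommGroup E] [InnerProductSpace ℝ E]

lemma psd_cs (T : E → E)
    (hsub : ∀ u v : E, T (u - v) = T u - T v)
    (hsmul : ∀ (r : ℝ) (u : E), T (r • u) = r • T u)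
    (hsym : ∀ u v : E, ⟪T u, v⟫_ℝ = ⟪u, T v⟫_ℝ)
    (hpsd : ∀ u : E, 0 ≤ ⟪T u, u⟫_ℝ) (u v : E) :
    ⟪T u, v⟫_ℝ ≤ Real.sqrt ⟪T u, u⟫_ℝ * Real.sqrt ⟪T v, v⟫_ℝ := by
  apply quad_nonneg_imp _ _ _ (hpsd u)
  intro r
  have key := hpsd (r • u - v)
  have e1 : T (r • u - v) = r • T u - T v := by rw [hsub, hsmul]
  rw [e1, inner_sub_left, inner_sub_right, inner_sub_right, real_inner_smul_left,
    inner_smul_right_eq_smul, inner_smul_right_eq_smul] at key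
  simp only [smul_eq_mul, real_inner_smul_left] at key
  have hsymuv : ⟪T v, u⟫_ℝ = ⟪T u, v⟫_ℝ := by
    rw [hsym v u, real_inner_comm]
  rw [hsymuv] at key
  nlinarith [key]

lemma vi_of_min [CompleteSpace E] (f : E → ℝ) (S : Set E) (hconv : Convex ℝ S) (x : E)
    (hx : x ∈ S) (g : E) (hg : HasGradientAt f g x) (hmin : ∀ y ∈ S, f x ≤ f y) :
    ∀ y ∈ S, 0 ≤ ⟪g, y - x⟫_ℝ := by
  intro y hy
  set u := y - x with hu
  have hline : HasDerivAt (fun s : ℝ => x + s • u) u 0 := by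
    simpa using ((hasDerivAt_id (0 : ℝ)).smul_const u).const_add x
  have hF : HasFDerivAt f ((InnerProductSpace.toDual ℝ E) g) x := hg
  have hF' : HasFDerivAt f ((InnerProductSpace.toDual ℝ E) g) ((fun s : ℝ => x + s • u) 0) := by
    simpa using hF
  have hcomp : HasDerivAt (fun s : ℝ => f (x + s • u)) ⟪g, u⟫_ℝ 0 := by
    have := hF'.comp_hasDerivAt 0 hline
    simpa [InnerProductSpace.toDual_apply_apply, Function.comp_def] using this
  set φ : ℝ → ℝ := fun s => f (x + s • u) with hφ
  have htend : Filter.Tendsto (slope φ 0) (nhdsWithin 0 (Set.Ioi 0)) (nhds ⟪g, u⟫_ℝ) := by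
    have h1 := hasDerivAt_iff_tendsto_slope.mp hcomp
    exact h1.mono_left (nhdsWithin_mono 0 (fun s hs => ne_of_gt hs))
  refine ge_of_tendsto htend ?_
  filter_upwards [Ioc_mem_nhdsGT_of_mem (by constructor <;> norm_num : (0:ℝ) ∈ Set.Ico (0:ℝ) 1)]
    with s hs
  have hsmem : x + s • u ∈ S := by
    have : x + s • u = (1 - s) • x + s • y := by
      rw [hu]; module
    rw [this]
    exact hconv hx hy (by linarith [hs.1, hs.2]) (le_of_lt hs.1) (by linarith [hs.2])
  have hge : φ 0 ≤ φ s := by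
    have h0 : φ 0 = f x := by simp [hφ]
    rw [h0]; exact hmin _ hsmem
  have hslope : slope φ 0 s = (φ s - φ 0) / s := by
    rw [slope_def_field, sub_zero]
  rw [hslope]
  exact div_nonneg (by linarith) (le_of_lt hs.1)

end Abstract

variable {N : ℕ} {d : Fin N → ℕ}

lemma inner_est (u v : Est N d) : ⟪u, v⟫_ℝ = ∑ i, ⟪u i, v i⟫_ℝ := PiLp.inner_apply u v

lemma norm_sq_piLp {ι : Type*} [Fintype ι] {E : ι → Type*} [∀ i, NormedAddCommGroup (E i)]
    [∀ i, InnerProductSpace ℝ (E i)] (u : PiLp 2 E) : ‖u‖ ^ 2 = ∑ i, ‖u i‖ ^ 2 := by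
  rw [← real_inner_self_eq_norm_sq, PiLp.inner_apply]
  exact Finset.sum_congr rfl fun i _ => real_inner_self_eq_norm_sq _

noncomputable def Rmap (u : Est N d) : Prof N d := WithLp.toLp 2 (fun i => u i i)

lemma norm_R_le (u : Est N d) : ‖Rmap u‖ ≤ ‖u‖ := by
  have hsum : ∑ i, ‖u i i‖ ^ 2 ≤ ∑ i, ‖u i‖ ^ 2 := by
    apply Finset.sum_le_sum
    intro i _
    have h2 : ‖u i‖ ^ 2 = ∑ j, ‖u i j‖ ^ 2 := norm_sq_piLp (u i)
    rw [h2]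
    exact Finset.single_le_sum (f := fun j => ‖u i j‖ ^ 2) (fun j _ => sq_nonneg _) (Finset.mem_univ i)
  have hA : ‖Rmap u‖ ^ 2 = ∑ i, ‖Rmap u i‖ ^ 2 := norm_sq_piLp _
  have hB : ‖u‖ ^ 2 = ∑ i, ‖u i‖ ^ 2 := norm_sq_piLp u
  have h1 : ‖Rmap u‖ ^ 2 ≤ ‖u‖ ^ 2 := by
    rw [hA, hB]; exact hsum
  calc ‖Rmap u‖ = Real.sqrt (‖Rmap u‖ ^ 2) :=
        (Real.sqrt_sq (norm_nonneg _)).symm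
    _ ≤ Real.sqrt (‖u‖ ^ 2) := Real.sqrt_le_sqrt h1
    _ = ‖u‖ := Real.sqrt_sq (norm_nonneg _)

lemma Wact_add (W : Matrix (Fin N) (Fin N) ℝ) (u v : Est N d) :
    Wact W (u + v) = Wact W u + Wact W v := by
  ext i : 1
  simp [Wact, PiLp.add_apply, smul_add, Finset.sum_add_distrib]

lemma Wact_sub (W : Matrix (Fin N) (Fin N) ℝ) (u v : Est N d) :
    Wact W (u - v) = Wact W u - Wact W v := by
  ext i : 1
  simp [Wact, PiLp.sub_apply, smul_sub, Finset.sum_sub_distrib]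

lemma Wact_smul (W : Matrix (Fin N) (Fin N) ℝ) (r : ℝ) (u : Est N d) :
    Wact W (r • u) = r • Wact W u := by
  ext i : 1
  show ∑ j, W i j • (r • u j) = r • ∑ j, W i j • u j
  rw [Finset.smul_sum]
  exact Finset.sum_congr rfl fun j _ => smul_comm _ _ _

lemma inner_Wact_symm (W : Matrix (Fin N) (Fin N) ℝ) (hW : W.IsSymm) (u v : Est N d) :
    ⟪Wact W u, v⟫_ℝ = ⟪u, Wact W v⟫_ℝ := by
  rw [inner_est, inner_est]
  have h1 : ∀ i, ⟪(Wact W u) i, v i⟫_ℝ = ∑ j, W i j * ⟪u j, v i⟫_ℝ := by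
    intro i
    have hh : (Wact W u) i = ∑ j, W i j • u j := rfl
    rw [hh, sum_inner]
    exact Finset.sum_congr rfl fun j _ => real_inner_smul_left _ _ _
  have h2 : ∀ i, ⟪u i, (Wact W v) i⟫_ℝ = ∑ j, W i j * ⟪u i, v j⟫_ℝ := by
    intro i
    have hh : (Wact W v) i = ∑ j, W i j • v j := rfl
    rw [hh, inner_sum]
    exact Finset.sum_congr rfl fun j _ => real_inner_smul_right _ _ _
  simp only [h1, h2]
  rw [Finset.sum_comm]
  apply Finset.sum_congr rfl; intro j _
  apply Finset.sum_congr rfl; intro i _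
  rw [show W j i = W i j from hW.apply i j, real_inner_comm]

lemma inner_RT (p : Prof N d) (u : Est N d) :
    ⟪RT p, u⟫_ℝ = ∑ i, ⟪p i, u i i⟫_ℝ := by
  rw [inner_est]
  apply Finset.sum_congr rfl; intro i _
  have h : ⟪(RT p) i, u i⟫_ℝ = ∑ j, ⟪(RT p) i j, u i j⟫_ℝ := PiLp.inner_apply _ _
  rw [h, Finset.sum_eq_single i]
  · have : (RT p) i i = p i := Function.update_self _ _ _
    rw [this]
  · intro j _ hj
    have : (RT p) i j = 0 := Function.update_of_ne hj _ _
    rw [this, inner_zero_left]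
  · simp

end SGaux
namespace SGaux

set_option maxHeartbeats 1000000 in
lemma strong_mono {N : ℕ} {d : Fin N → ℕ} (hN : 0 < N)
    (G : ∀ i : Fin N, Prof N d → EuclideanSpace ℝ (Fin (d i)))
    (W : Matrix (Fin N) (Fin N) ℝ) (hWsymm : W.IsSymm) (hWstoch : ∀ i, ∑ j, W i j = 1)
    (xstar : Prof N d) (bxstar : Est N d) (hbxstar : ∀ i, bxstar i = xstar)
    (μ θ0 θ lam2 α ρα : ℝ) (hα0 : 0 < α) (hθ : 0 ≤ θ) (hθ0 : 0 ≤ θ0)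
    (hFmon : ∀ x y : Prof N d,
      ⟪x - y, pseudoGrad G x - pseudoGrad G y⟫_ℝ ≥ μ * ‖x - y‖ ^ 2)
    (hFlip : ∀ x y : Prof N d, ‖pseudoGrad G x - pseudoGrad G y‖ ≤ θ0 * ‖x - y‖)
    (hextLip : ∀ bx by_ : Est N d,
      ‖extPseudoGrad G bx - extPseudoGrad G by_‖ ≤ θ * ‖bx - by_‖)
    (hgap : ∀ v : Est N d, (∀ u ∈ consensus N d, ⟪v, u⟫_ℝ = 0) →
      ⟪v, v - Wact W v⟫_ℝ ≥ lam2 * ‖v‖ ^ 2)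
    (hM : ∀ v : Fin 2 → ℝ,
      (α • !![μ / (N : ℝ), -(θ0 + θ) / (2 * Real.sqrt (N : ℝ));
        -(θ0 + θ) / (2 * Real.sqrt (N : ℝ)), lam2 / α - θ]).mulVec v ⬝ᵥ v ≥
        ρα * (v ⬝ᵥ v))
    (bx : Est N d) :
    ρα * ‖bx - bxstar‖ ^ 2 ≤ ⟪Fa α G W bx - Fa α G W bxstar, bx - bxstar⟫_ℝ := by
  have hNR : (0:ℝ) < (N:ℝ) := by exact_mod_cast hN
  set v : Est N d := bx - bxstar with hv
  set ybar : Prof N d := (N:ℝ)⁻¹ • ∑ i, v i with hybar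
  set vpar : Est N d := WithLp.toLp 2 (fun _ => ybar) with hvpar
  set vperp : Est N d := v - vpar with hvperp
  have hsplit : v = vpar + vperp := by rw [hvperp]; abel
  have hsumconst : ∑ _i : Fin N, ybar = (N:ℝ) • ybar := by
    rw [Finset.sum_const, Finset.card_univ, Fintype.card_fin]
    exact (Nat.cast_smul_eq_nsmul ℝ N ybar).symm
  have hsumv : ∑ i, vperp i = 0 := by
    have h1 : ∑ i, vperp i = (∑ i, v i) - ∑ _i : Fin N, ybar := by
      rw [← Finset.sum_sub_distrib]
      exact Finset.sum_congr rfl fun i _ => rfl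
    rw [h1, hsumconst, hybar, smul_inv_smul₀ (ne_of_gt hNR), sub_self]
  have hperp_orth : ∀ u ∈ consensus N d, ⟪vperp, u⟫_ℝ = 0 := by
    rintro u ⟨y, hy⟩
    rw [inner_est]
    have h2 : ∀ i ∈ Finset.univ, ⟪vperp i, u i⟫_ℝ = ⟪vperp i, y⟫_ℝ :=
      fun i _ => by rw [hy i]
    rw [Finset.sum_congr rfl h2, ← sum_inner, hsumv, inner_zero_left]
  have hvpar_cons : vpar ∈ consensus N d := ⟨ybar, fun i => rfl⟩
  have h_ppo : ⟪vperp, vpar⟫_ℝ = 0 := hperp_orth vpar hvpar_cons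
  have h_ppo : ⟪vpar, vperp⟫_ℝ = 0 := by rw [real_inner_comm]; exact h_ppo
  set B := ‖ybar‖ with hB
  set t := ‖vperp‖ with ht
  have hpyth : ‖v‖ ^ 2 = (N:ℝ) * B ^ 2 + t ^ 2 := by
    have h3 : ‖v‖ ^ 2 = ‖vpar‖ ^ 2 + 2 * ⟪vpar, vperp⟫_ℝ + ‖vperp‖ ^ 2 := by
      rw [hsplit]; exact norm_add_sq_real vpar vperp
    have h4 : ‖vpar‖ ^ 2 = (N:ℝ) * B ^ 2 := by
      rw [norm_sq_piLp vpar]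
      simp only [hvpar]
      rw [Finset.sum_const, Finset.card_univ, Fintype.card_fin, nsmul_eq_mul]
    rw [h3, h4, h_ppo]; ring
  -- W part
  have hWvpar : Wact W vpar = vpar := by
    ext i : 1
    show ∑ j, W i j • vpar j = vpar i
    simp only [hvpar]
    rw [← Finset.sum_smul, hWstoch i, one_smul]
  have hT2 : lam2 * t ^ 2 ≤ ⟪v - Wact W v, v⟫_ℝ := by
    have hWv : Wact W v = vpar + Wact W vperp := by
      rw [hsplit, Wact_add, hWvpar]
    have e : v - Wact W v = vperp - Wact W vperp := by
      rw [hWv, hsplit]; abel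
    have c1 : ⟪vperp - Wact W vperp, vpar⟫_ℝ = 0 := by
      rw [inner_sub_left, inner_Wact_symm W hWsymm, hWvpar]
      exact sub_self _
    have c2 : lam2 * t ^ 2 ≤ ⟪vperp - Wact W vperp, vperp⟫_ℝ := by
      have h5 := hgap vperp hperp_orth
      rw [real_inner_comm]
      exact h5
    calc lam2 * t ^ 2 ≤ ⟪vperp - Wact W vperp, vperp⟫_ℝ := c2
      _ = ⟪vperp - Wact W vperp, vpar⟫_ℝ + ⟪vperp - Wact W vperp, vperp⟫_ℝ := by
          rw [c1, zero_add]
      _ = ⟪vperp - Wact W vperp, vpar + vperp⟫_ℝ := (inner_add_right _ _ _).symm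
      _ = ⟪v - Wact W v, v⟫_ℝ := by rw [e, ← hsplit]
  -- α part
  set Fbx := extPseudoGrad G bx with hFbx
  set Fstar := extPseudoGrad G bxstar with hFstar
  have hFstareq : Fstar = pseudoGrad G xstar := by
    ext i : 1
    show G i (bxstar i) = G i xstar
    rw [hbxstar i]
  set bmid : Est N d := WithLp.toLp 2 (fun _ => xstar + ybar) with hbmid
  set Fmid := extPseudoGrad G bmid with hFmid
  have hFmideq : Fmid = pseudoGrad G (xstar + ybar) := rfl
  have hbxmid : bx - bmid = vperp := by
    ext i : 1
    show bx i - (xstar + ybar) = vperp i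
    have h6 : vperp i = v i - ybar := rfl
    have h7 : v i = bx i - bxstar i := rfl
    rw [h6, h7, hbxstar i]
    abel
  have hRvdec : Rmap v = ybar + Rmap vperp := by
    ext i : 1
    show v i i = ybar i + vperp i i
    have h8 : vperp i i = v i i - ybar i := rfl
    rw [h8]; abel
  have hRT : ∀ p : Prof N d, ⟪RT p, v⟫_ℝ = ⟪p, Rmap v⟫_ℝ := by
    intro p
    rw [inner_RT, PiLp.inner_apply]
    rfl
  have hnormRv : ‖Rmap v‖ ≤ B + t := by
    rw [hRvdec]
    calc ‖ybar + Rmap vperp‖ ≤ ‖ybar‖ + ‖Rmap vperp‖ := norm_add_le _ _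
      _ ≤ B + t := by
          have := norm_R_le vperp
          rw [hB, ht]
          linarith [norm_R_le vperp]
  have b1 : -(θ * t * (B + t)) ≤ ⟪Fbx - Fmid, Rmap v⟫_ℝ := by
    have habs : |⟪Fbx - Fmid, Rmap v⟫_ℝ| ≤ ‖Fbx - Fmid‖ * ‖Rmap v‖ :=
      abs_real_inner_le_norm _ _
    have hlip : ‖Fbx - Fmid‖ ≤ θ * t := by
      have := hextLip bx bmid
      rw [hbxmid] at this
      exact this
    have hprod : ‖Fbx - Fmid‖ * ‖Rmap v‖ ≤ θ * t * (B + t) := by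
      apply mul_le_mul hlip hnormRv (norm_nonneg _)
      positivity
    linarith [neg_abs_le ⟪Fbx - Fmid, Rmap v⟫_ℝ]
  have b2 : μ * B ^ 2 - θ0 * B * t ≤ ⟪Fmid - Fstar, Rmap v⟫_ℝ := by
    have hdiff : Fmid - Fstar = pseudoGrad G (xstar + ybar) - pseudoGrad G xstar := by
      rw [hFmideq, hFstareq]
    have hmon := hFmon (xstar + ybar) xstar
    rw [add_sub_cancel_left] at hmon
    have b2a : μ * B ^ 2 ≤ ⟪Fmid - Fstar, ybar⟫_ℝ := by
      rw [hdiff, real_inner_comm]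
      exact hmon
    have b2b : -(θ0 * B * t) ≤ ⟪Fmid - Fstar, Rmap vperp⟫_ℝ := by
      have habs : |⟪Fmid - Fstar, Rmap vperp⟫_ℝ| ≤ ‖Fmid - Fstar‖ * ‖Rmap vperp‖ :=
        abs_real_inner_le_norm _ _
      have hlip : ‖Fmid - Fstar‖ ≤ θ0 * B := by
        rw [hdiff]
        have := hFlip (xstar + ybar) xstar
        rw [add_sub_cancel_left] at this
        exact this
      have hprod : ‖Fmid - Fstar‖ * ‖Rmap vperp‖ ≤ θ0 * B * t := by
        apply mul_le_mul hlip (norm_R_le vperp) (norm_nonneg _)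
        positivity
      linarith [neg_abs_le ⟪Fmid - Fstar, Rmap vperp⟫_ℝ]
    calc μ * B ^ 2 - θ0 * B * t ≤ ⟪Fmid - Fstar, ybar⟫_ℝ + ⟪Fmid - Fstar, Rmap vperp⟫_ℝ := by
          linarith
      _ = ⟪Fmid - Fstar, ybar + Rmap vperp⟫_ℝ := (inner_add_right _ _ _).symm
      _ = ⟪Fmid - Fstar, Rmap v⟫_ℝ := by rw [← hRvdec]
  have hT1 : α * (μ * B ^ 2 - (θ0 + θ) * B * t - θ * t ^ 2) ≤
      ⟪α • RT Fbx - α • RT Fstar, v⟫_ℝ := by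
    rw [inner_sub_left, real_inner_smul_left, real_inner_smul_left, ← mul_sub,
      hRT, hRT, ← inner_sub_left]
    have hsplit2 : Fbx - Fstar = (Fbx - Fmid) + (Fmid - Fstar) := by abel
    rw [hsplit2, inner_add_left]
    have hsum2 : μ * B ^ 2 - (θ0 + θ) * B * t - θ * t ^ 2 ≤
        ⟪Fbx - Fmid, Rmap v⟫_ℝ + ⟪Fmid - Fstar, Rmap v⟫_ℝ := by
      linarith [b1, b2]
    exact mul_le_mul_of_nonneg_left hsum2 hα0.le
  -- combine
  have hFa : Fa α G W bx - Fa α G W bxstar =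
      (α • RT Fbx - α • RT Fstar) + (v - Wact W v) := by
    have hWv2 : Wact W v = Wact W bx - Wact W bxstar := by
      rw [hv, Wact_sub]
    simp only [Fa, ← hFbx, ← hFstar]
    rw [hWv2, hv]
    abel
  rw [hFa, inner_add_left]
  -- key quadratic inequality
  have key : ρα * ((N : ℝ) * B ^ 2 + t ^ 2) ≤
      α * μ * B ^ 2 - α * (θ0 + θ) * B * t + (lam2 - α * θ) * t ^ 2 := by
    have hαne : α ≠ 0 := ne_of_gt hα0
    have hMk := hM ![Real.sqrt (N : ℝ) * B, t]
    simp [Matrix.mulVec, dotProduct, Fin.sum_univ_two] at hMk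
    obtain ⟨s, hsq⟩ : ∃ s, Real.sqrt (N : ℝ) = s := ⟨_, rfl⟩
    rw [hsq] at hMk
    have hs : s * s = (N : ℝ) := by rw [← hsq]; exact Real.mul_self_sqrt hNR.le
    have hsne : s ≠ 0 := by
      intro h; rw [h] at hs; simp at hs; exact ne_of_gt hNR hs.symm
    rw [← hs]
    calc ρα * (s * s * B ^ 2 + t ^ 2) = ρα * (s * B * (s * B) + t * t) := by ring
      _ ≤ (α * (μ / (N:ℝ)) * (s * B) + α * ((-θ + -θ0) / (2 * s)) * t) * (s * B) +
          (α * ((-θ + -θ0) / (2 * s)) * (s * B) + α * (lam2 / α - θ) * t) * t := hMk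
      _ = α * μ * B ^ 2 - α * (θ0 + θ) * B * t + (lam2 - α * θ) * t ^ 2 := by
          rw [← hs]; field_simp; ring
  rw [hpyth]
  nlinarith [hT1, hT2, key]

end SGaux
set_option maxHeartbeats 1000000 in
/-- Theorem 2 of the paper, main result. Let `x*` be a Nash equilibrium
and `𝐱* = 𝟏_N ⊗ x*`. Under the standing assumptions, for `θ ∈ [μ, θ0]` a Lipschitz constant
of `𝐅`, `λ2 > 0` a spectral-gap constant of `I − 𝐖`, `α ∈ (0, α_max)`,
`ρ_α > 0` with `M ⪰ ρ_α I`, `Φ := I + 𝐖` with operator norm `‖Φ‖ = nΦ` and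
`Φ ⪰ λ_m I`, every sequence generated by the preconditioned proximal-point iteration
`0 ∈ Φ(𝐱^{k+1} − 𝐱^k) + F_a(𝐱^{k+1}) + N_𝛀(𝐱^{k+1})` converges to `𝐱*` with linear rate
`‖𝐱^k − 𝐱*‖ ≤ √(‖Φ‖/λ_m) (1/(1 + ρ_α/‖Φ‖))^k ‖𝐱^0 − 𝐱*‖`. -/
theorem stmt10 {N : ℕ} {d : Fin N → ℕ} (hN : 0 < N)
    (Ω : ∀ i : Fin N, Set (EuclideanSpace ℝ (Fin (d i))))
    (hΩ : ∀ i, (Ω i).Nonempty ∧ IsClosed (Ω i) ∧ Convex ℝ (Ω i))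
    (J : ∀ _ : Fin N, Prof N d → ℝ)
    (hJcont : ∀ i, Continuous (J i))
    (hJconv : ∀ i (x : Prof N d),
      ConvexOn ℝ Set.univ (fun y => J i (WithLp.toLp 2 (Function.update x i y))))
    (G : ∀ i : Fin N, Prof N d → EuclideanSpace ℝ (Fin (d i)))
    (hGgrad : ∀ i (x : Prof N d),
      HasGradientAt (fun y => J i (WithLp.toLp 2 (Function.update x i y))) (G i x) (x i))
    (μ θ0 : ℝ) (hμ : 0 < μ) (hθ0 : 0 < θ0)
    (hFmon : ∀ x y : Prof N d,
      ⟪x - y, pseudoGrad G x - pseudoGrad G y⟫_ℝ ≥ μ * ‖x - y‖ ^ 2)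
    (hFlip : ∀ x y : Prof N d, ‖pseudoGrad G x - pseudoGrad G y‖ ≤ θ0 * ‖x - y‖)
    (W : Matrix (Fin N) (Fin N) ℝ)
    (hWsymm : W.IsSymm) (hWnonneg : ∀ i j, 0 ≤ W i j)
    (hWstoch : ∀ i, ∑ j, W i j = 1) (hWdiag : ∀ i, 0 < W i i)
    (hWconn : ∀ S : Finset (Fin N), S.Nonempty → S ≠ Finset.univ →
      ∃ i ∈ S, ∃ j ∉ S, 0 < W i j)
    -- x* is a Nash equilibrium, and 𝐱* := 𝟏_N ⊗ x*
    (xstar : Prof N d) (hxstarΩ : ∀ i, xstar i ∈ Ω i)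
    (hxstarNE : ∀ i, ∀ y ∈ Ω i, J i xstar ≤ J i (WithLp.toLp 2 (Function.update xstar i y)))
    (bxstar : Est N d) (hbxstar : ∀ i, bxstar i = xstar)
    -- θ is a Lipschitz constant of 𝐅, with θ ∈ [μ, θ0]
    (θ : ℝ) (hθl : μ ≤ θ) (hθu : θ ≤ θ0)
    (hextLip : ∀ bx by_ : Est N d,
      ‖extPseudoGrad G bx - extPseudoGrad G by_‖ ≤ θ * ‖bx - by_‖)
    -- λ2 is a spectral-gap constant of I − 𝐖 orthogonally to the consensus subspace
    (lam2 : ℝ) (hlam2 : 0 < lam2)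
    (hgap : ∀ v : Est N d, (∀ u ∈ consensus N d, ⟪v, u⟫_ℝ = 0) →
      ⟪v, v - Wact W v⟫_ℝ ≥ lam2 * ‖v‖ ^ 2)
    -- α ∈ (0, α_max)
    (α : ℝ) (hα0 : 0 < α)
    (hαmax : α < 4 * μ * lam2 / ((θ0 + θ) ^ 2 + 4 * μ * θ))
    -- ρ_α > 0 with M ⪰ ρ_α I
    (ρα : ℝ) (hρα : 0 < ρα)
    (hM : ∀ v : Fin 2 → ℝ,
      (α • !![μ / (N : ℝ), -(θ0 + θ) / (2 * Real.sqrt (N : ℝ));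
        -(θ0 + θ) / (2 * Real.sqrt (N : ℝ)), lam2 / α - θ]).mulVec v ⬝ᵥ v ≥
        ρα * (v ⬝ᵥ v))
    -- nΦ is the operator norm of Φ = I + 𝐖, and Φ ⪰ λ_m I with λ_m > 0
    (nΦ : ℝ) (hnΦ : IsLUB ((fun v : Est N d => ‖PhiOp W v‖) '' {v | ‖v‖ ≤ 1}) nΦ)
    (lamm : ℝ) (hlamm : 0 < lamm)
    (hΦlower : ∀ v : Est N d, ⟪PhiOp W v, v⟫_ℝ ≥ lamm * ‖v‖ ^ 2) :
    ∀ bx : ℕ → Est N d,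
      (∀ k : ℕ, ∃ w ∈ normalCone (bigOmega Ω) (bx (k + 1)),
        PhiOp W (bx (k + 1) - bx k) + Fa α G W (bx (k + 1)) + w = 0) →
      ∀ k : ℕ, ‖bx k - bxstar‖ ≤
        Real.sqrt (nΦ / lamm) * (1 / (1 + ρα / nΦ)) ^ k * ‖bx 0 - bxstar‖ := by
  intro bx hseq
  have hbxstarBig : bxstar ∈ bigOmega Ω := by
    intro i
    rw [hbxstar i]
    exact hxstarΩ i
  -- variational inequality at the Nash equilibrium
  have hVI : ∀ i, ∀ y ∈ Ω i, 0 ≤ ⟪G i xstar, y - xstar i⟫_ℝ := by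
    intro i
    apply SGaux.vi_of_min (fun y => J i (WithLp.toLp 2 (Function.update xstar i y))) (Ω i) (hΩ i).2.2
      (xstar i) (hxstarΩ i) (G i xstar) (hGgrad i xstar)
    intro y hy
    have h0 : WithLp.toLp 2 (Function.update xstar i (xstar i)) = xstar := by
      rw [Function.update_eq_self]
    calc J i (WithLp.toLp 2 (Function.update xstar i (xstar i))) = J i xstar := by rw [h0]
      _ ≤ J i (WithLp.toLp 2 (Function.update xstar i y)) := hxstarNE i y hy
  -- Fa at the equilibrium
  have hWbxstar : Wact W bxstar = bxstar := by
    ext i : 1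
    show ∑ j, W i j • bxstar j = bxstar i
    have h1 : ∀ j ∈ Finset.univ, W i j • bxstar j = W i j • xstar :=
      fun j _ => by rw [hbxstar j]
    rw [Finset.sum_congr rfl h1, ← Finset.sum_smul, hWstoch i, one_smul, hbxstar i]
  have hFstareq : extPseudoGrad G bxstar = pseudoGrad G xstar := by
    ext i : 1
    show G i (bxstar i) = G i xstar
    rw [hbxstar i]
  have hFabxstar : Fa α G W bxstar = α • RT (pseudoGrad G xstar) := by
    rw [Fa, hWbxstar, sub_self, add_zero, hFstareq]
  have hEqVI : ∀ z ∈ bigOmega Ω, 0 ≤ ⟪Fa α G W bxstar, z - bxstar⟫_ℝ := by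
    intro z hz
    rw [hFabxstar, real_inner_smul_left, SGaux.inner_RT]
    apply mul_nonneg hα0.le
    apply Finset.sum_nonneg
    intro i _
    have h1 : (z - bxstar) i i = z i i - xstar i := by
      have h2 : (z - bxstar) i i = z i i - bxstar i i := rfl
      rw [h2, hbxstar i]
    rw [h1]
    exact hVI i (z i i) (hz i)
  -- Φ operator facts
  have hPhisub : ∀ u v : Est N d, PhiOp W (u - v) = PhiOp W u - PhiOp W v := by
    intro u v
    simp only [PhiOp, SGaux.Wact_sub]
    abel
  have hPhismul : ∀ (r : ℝ) (u : Est N d), PhiOp W (r • u) = r • PhiOp W u := by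
    intro r u
    simp only [PhiOp, SGaux.Wact_smul, smul_add]
  have hPhisym : ∀ u v : Est N d, ⟪PhiOp W u, v⟫_ℝ = ⟪u, PhiOp W v⟫_ℝ := by
    intro u v
    simp only [PhiOp, inner_add_left, inner_add_right]
    rw [SGaux.inner_Wact_symm W hWsymm]
  have hPhipsd : ∀ u : Est N d, 0 ≤ ⟪PhiOp W u, u⟫_ℝ := by
    intro u
    have := hΦlower u
    nlinarith [sq_nonneg ‖u‖, hlamm]
  have hPhizero : PhiOp W (0 : Est N d) = 0 := by
    have := hPhisub 0 0
    simpa using this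
  have hnΦ0 : 0 ≤ nΦ := by
    have hmem : (0:ℝ) ∈ (fun v : Est N d => ‖PhiOp W v‖) '' {v | ‖v‖ ≤ 1} :=
      ⟨0, by simp, by simp [hPhizero]⟩
    exact le_trans (le_of_eq rfl) (hnΦ.1 hmem)
  have hupper : ∀ u : Est N d, ‖PhiOp W u‖ ≤ nΦ * ‖u‖ := by
    intro u
    rcases eq_or_ne u 0 with h | h
    · rw [h, hPhizero]; simp
    · have hn : 0 < ‖u‖ := norm_pos_iff.mpr h
      have hmem : ‖PhiOp W (‖u‖⁻¹ • u)‖ ∈ (fun v : Est N d => ‖PhiOp W v‖) '' {v | ‖v‖ ≤ 1} :=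
        ⟨‖u‖⁻¹ • u, by simp [norm_smul, abs_of_nonneg (inv_nonneg.mpr hn.le),
          inv_mul_cancel₀ (ne_of_gt hn)], rfl⟩
      have hle := hnΦ.1 hmem
      rw [hPhismul, norm_smul, Real.norm_eq_abs, abs_of_nonneg (inv_nonneg.mpr hn.le)] at hle
      calc ‖PhiOp W u‖ = ‖u‖ * (‖u‖⁻¹ * ‖PhiOp W u‖) := by
            field_simp
        _ ≤ ‖u‖ * nΦ := by
            apply mul_le_mul_of_nonneg_left hle hn.le
        _ = nΦ * ‖u‖ := mul_comm _ _
  have hform_upper : ∀ u : Est N d, ⟪PhiOp W u, u⟫_ℝ ≤ nΦ * ‖u‖ ^ 2 := by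
    intro u
    calc ⟪PhiOp W u, u⟫_ℝ ≤ ‖PhiOp W u‖ * ‖u‖ := real_inner_le_norm _ _
      _ ≤ nΦ * ‖u‖ * ‖u‖ := mul_le_mul_of_nonneg_right (hupper u) (norm_nonneg _)
      _ = nΦ * ‖u‖ ^ 2 := by ring
  by_cases htriv : ∀ u : Est N d, u = 0
  · intro k
    rw [htriv (bx k - bxstar), htriv (bx 0 - bxstar)]
    simp
  · push_neg at htriv
    obtain ⟨u0, hu0⟩ := htriv
    have hnΦpos : 0 < nΦ := by
      have hn : 0 < ‖u0‖ := norm_pos_iff.mpr hu0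
      set w := ‖u0‖⁻¹ • u0 with hw
      have hwnorm : ‖w‖ = 1 := by
        rw [hw, norm_smul, Real.norm_eq_abs, abs_of_nonneg (inv_nonneg.mpr hn.le),
          inv_mul_cancel₀ (ne_of_gt hn)]
      have h1 : lamm ≤ ⟪PhiOp W w, w⟫_ℝ := by
        have := hΦlower w
        rw [hwnorm] at this
        simpa using this
      have h2 : ⟪PhiOp W w, w⟫_ℝ ≤ nΦ := by
        have := hform_upper w
        rw [hwnorm] at this
        simpa using this
      linarith
    have hmono := SGaux.strong_mono hN G W hWsymm hWstoch xstar bxstar hbxstar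
      μ θ0 θ lam2 α ρα hα0 (le_trans hμ.le hθl) hθ0.le hFmon hFlip hextLip hgap hM
    set t : ℝ := ρα / nΦ with htdef
    have htpos : 0 < t := div_pos hρα hnΦpos
    set a : ℕ → ℝ := fun k => Real.sqrt ⟪PhiOp W (bx k - bxstar), bx k - bxstar⟫_ℝ
      with hadef
    have hasq : ∀ k, a k ^ 2 = ⟪PhiOp W (bx k - bxstar), bx k - bxstar⟫_ℝ := by
      intro k
      exact Real.sq_sqrt (hPhipsd _)
    have hanonneg : ∀ k, 0 ≤ a k := fun k => Real.sqrt_nonneg _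
    -- the one-step contraction
    have hstep : ∀ k, (1 + t) * a (k + 1) ≤ a k := by
      intro k
      obtain ⟨w, ⟨hwmem, hwnc⟩, heq0⟩ := hseq k
      have hsum0 : ⟪PhiOp W (bx (k + 1) - bx k), bx (k + 1) - bxstar⟫_ℝ +
          ⟪Fa α G W (bx (k + 1)), bx (k + 1) - bxstar⟫_ℝ +
          ⟪w, bx (k + 1) - bxstar⟫_ℝ = 0 := by
        have h3 : ⟪PhiOp W (bx (k + 1) - bx k) + Fa α G W (bx (k + 1)) + w,
            bx (k + 1) - bxstar⟫_ℝ = 0 := by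
          rw [heq0, inner_zero_left]
        rw [inner_add_left, inner_add_left] at h3
        linarith
      have hw1 : 0 ≤ ⟪w, bx (k + 1) - bxstar⟫_ℝ := by
        have h4 := hwnc bxstar hbxstarBig
        have h5 : bxstar - bx (k + 1) = -(bx (k + 1) - bxstar) := by abel
        rw [h5, inner_neg_right] at h4
        linarith
      have hFa1 : ρα * ‖bx (k + 1) - bxstar‖ ^ 2 ≤
          ⟪Fa α G W (bx (k + 1)), bx (k + 1) - bxstar⟫_ℝ := by
        have h6 := hmono (bx (k + 1))
        have h7 := hEqVI (bx (k + 1)) hwmem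
        have h8 : ⟪Fa α G W (bx (k + 1)), bx (k + 1) - bxstar⟫_ℝ =
            ⟪Fa α G W (bx (k + 1)) - Fa α G W bxstar, bx (k + 1) - bxstar⟫_ℝ +
            ⟪Fa α G W bxstar, bx (k + 1) - bxstar⟫_ℝ := by
          rw [inner_sub_left]; ring
        rw [h8]
        linarith [h6, h7]
      have hsplitΦ : PhiOp W (bx (k + 1) - bx k) =
          PhiOp W (bx (k + 1) - bxstar) - PhiOp W (bx k - bxstar) := by
        rw [← hPhisub]
        congr 1
        abel
      have hineq1 : ⟪PhiOp W (bx (k + 1) - bxstar), bx (k + 1) - bxstar⟫_ℝ +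
          ρα * ‖bx (k + 1) - bxstar‖ ^ 2 ≤
          ⟪PhiOp W (bx k - bxstar), bx (k + 1) - bxstar⟫_ℝ := by
        rw [hsplitΦ, inner_sub_left] at hsum0
        linarith
      have hcs : ⟪PhiOp W (bx k - bxstar), bx (k + 1) - bxstar⟫_ℝ ≤ a k * a (k + 1) :=
        SGaux.psd_cs (PhiOp W) hPhisub hPhismul hPhisym hPhipsd _ _
      have hlow : (t : ℝ) * ⟪PhiOp W (bx (k + 1) - bxstar), bx (k + 1) - bxstar⟫_ℝ ≤
          ρα * ‖bx (k + 1) - bxstar‖ ^ 2 := by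
        have h9 : ⟪PhiOp W (bx (k + 1) - bxstar), bx (k + 1) - bxstar⟫_ℝ ≤
            nΦ * ‖bx (k + 1) - bxstar‖ ^ 2 := hform_upper _
        rw [htdef, div_mul_eq_mul_div, div_le_iff₀ hnΦpos]
        nlinarith [hρα, h9]
      have hkey : (1 + t) * a (k + 1) ^ 2 ≤ a k * a (k + 1) := by
        rw [hasq]
        calc (1 + t) * ⟪PhiOp W (bx (k + 1) - bxstar), bx (k + 1) - bxstar⟫_ℝ =
              ⟪PhiOp W (bx (k + 1) - bxstar), bx (k + 1) - bxstar⟫_ℝ +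
              t * ⟪PhiOp W (bx (k + 1) - bxstar), bx (k + 1) - bxstar⟫_ℝ := by ring
          _ ≤ ⟪PhiOp W (bx (k + 1) - bxstar), bx (k + 1) - bxstar⟫_ℝ +
              ρα * ‖bx (k + 1) - bxstar‖ ^ 2 := by linarith
          _ ≤ ⟪PhiOp W (bx k - bxstar), bx (k + 1) - bxstar⟫_ℝ := hineq1
          _ ≤ a k * a (k + 1) := hcs
      rcases eq_or_lt_of_le (hanonneg (k + 1)) with h10 | h10
      · rw [← h10, mul_zero]
        exact hanonneg k
      · nlinarith [hkey, h10]
    -- induction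
    have hq1 : (0 : ℝ) < 1 + t := by linarith
    have hind : ∀ k, a k ≤ (1 / (1 + t)) ^ k * a 0 := by
      intro k
      induction k with
      | zero => simp
      | succ m ih =>
        have h11 : a (m + 1) ≤ 1 / (1 + t) * a m := by
          rw [div_mul_eq_mul_div, le_div_iff₀ hq1]
          calc a (m + 1) * (1 + t) = (1 + t) * a (m + 1) := mul_comm _ _
            _ ≤ a m := hstep m
            _ = 1 * a m := (one_mul _).symm
        calc a (m + 1) ≤ 1 / (1 + t) * a m := h11
          _ ≤ 1 / (1 + t) * ((1 / (1 + t)) ^ m * a 0) := by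
              apply mul_le_mul_of_nonneg_left ih
              positivity
          _ = (1 / (1 + t)) ^ (m + 1) * a 0 := by ring
    -- conclusion
    intro k
    have hlamms : 0 < Real.sqrt lamm := Real.sqrt_pos.mpr hlamm
    have s1 : Real.sqrt lamm * ‖bx k - bxstar‖ ≤ a k := by
      have h12 : lamm * ‖bx k - bxstar‖ ^ 2 ≤ ⟪PhiOp W (bx k - bxstar), bx k - bxstar⟫_ℝ :=
        hΦlower _
      have h13 : Real.sqrt (lamm * ‖bx k - bxstar‖ ^ 2) =
          Real.sqrt lamm * ‖bx k - bxstar‖ := by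
        rw [Real.sqrt_mul hlamm.le, Real.sqrt_sq (norm_nonneg _)]
      rw [← h13]
      exact Real.sqrt_le_sqrt h12
    have s2 : a 0 ≤ Real.sqrt nΦ * ‖bx 0 - bxstar‖ := by
      have h14 : ⟪PhiOp W (bx 0 - bxstar), bx 0 - bxstar⟫_ℝ ≤ nΦ * ‖bx 0 - bxstar‖ ^ 2 :=
        hform_upper _
      have h15 : Real.sqrt (nΦ * ‖bx 0 - bxstar‖ ^ 2) =
          Real.sqrt nΦ * ‖bx 0 - bxstar‖ := by
        rw [Real.sqrt_mul hnΦ0, Real.sqrt_sq (norm_nonneg _)]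
      rw [← h15]
      exact Real.sqrt_le_sqrt h14
    have hqpow : (0 : ℝ) ≤ (1 / (1 + t)) ^ k := by positivity
    have main : Real.sqrt lamm * ‖bx k - bxstar‖ ≤
        (1 / (1 + t)) ^ k * (Real.sqrt nΦ * ‖bx 0 - bxstar‖) := by
      calc Real.sqrt lamm * ‖bx k - bxstar‖ ≤ a k := s1
        _ ≤ (1 / (1 + t)) ^ k * a 0 := hind k
        _ ≤ (1 / (1 + t)) ^ k * (Real.sqrt nΦ * ‖bx 0 - bxstar‖) :=
            mul_le_mul_of_nonneg_left s2 hqpow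
    have hdiv : Real.sqrt (nΦ / lamm) = Real.sqrt nΦ / Real.sqrt lamm :=
      Real.sqrt_div hnΦ0 lamm
    rw [hdiv]
    rw [← sub_nonneg] at main ⊢
    calc (0:ℝ) ≤ ((1 / (1 + t)) ^ k * (Real.sqrt nΦ * ‖bx 0 - bxstar‖) -
            Real.sqrt lamm * ‖bx k - bxstar‖) / Real.sqrt lamm := by positivity
        _ = Real.sqrt nΦ / Real.sqrt lamm * (1 / (1 + t)) ^ k * ‖bx 0 - bxstar‖ -
            ‖bx k - bxstar‖ := by
            field_simp
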